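/- For n ≥ 3 and i ≥ 2, the number c_{n,i} of independent sets of size i in the cycle C_n satisfies i · c_{n,i} = n · p_{n-3, i-1}, where p_{m,j} is the number of independent sets of size j in the path P_m. -/

import Mathlib

open Finset SimpleGraph

noncomputable def numIndep {V : Type*} [Fintype V] (G : SimpleGraph V) (i : ℕ) : ℕ :=
  Set.ncard {s : Finset V | s.card = i ∧ ∀ a ∈ s, ∀ b ∈ s, ¬ G.Adj a b}

noncomputable def indepNum {V : Type*} [Fintype V] (G : SimpleGraph V) : ℕ :=
  sSup {i | ∃ s : Finset V, s.card = i ∧ ∀ a ∈ s, ∀ b ∈ s, ¬ G.Adj a b}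

lemma modsub_eq_one_iff (n a b : ℕ) (hn : 2 ≤ n) (ha : a < n) (hb : b < n) :
    (n - b + a) % n = 1 ↔ (a = b + 1 ∨ (b = n - 1 ∧ a = 0)) := by
  rcases le_or_gt b a with hle | hlt
  · rw [show n - b + a = n + (a - b) by omega, Nat.add_mod_left,
      Nat.mod_eq_of_lt (show a - b < n by omega)]
    omega
  · rw [Nat.mod_eq_of_lt (show n - b + a < n by omega)]
    omega

lemma cycle_adj_val (m : ℕ) (x y : Fin (m+3)) :
    (cycleGraph (m+3)).Adj x y ↔
      ((x.val = y.val + 1 ∨ (y.val = m + 2 ∧ x.val = 0)) ∨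
       (y.val = x.val + 1 ∨ (x.val = m + 2 ∧ y.val = 0))) := by
  rw [cycleGraph_adj', Fin.sub_def, Fin.sub_def]
  simp only [Fin.val_mk]
  rw [modsub_eq_one_iff _ _ _ (by omega) x.isLt y.isLt,
    modsub_eq_one_iff _ _ _ (by omega) y.isLt x.isLt]
  constructor
  · rintro (h | h)
    · left; omega
    · right; omega
  · rintro (h | h)
    · left; omega
    · right; omega

lemma cycle_adj_iff_val (m : ℕ) (x y : Fin (m+3)) (hx : 2 ≤ x.val ∧ x.val ≤ m+1)
    (hy : 2 ≤ y.val ∧ y.val ≤ m+1) :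
    (cycleGraph (m+3)).Adj x y ↔ (x.val = y.val + 1 ∨ y.val = x.val + 1) := by
  rw [cycle_adj_val]; omega

lemma cycle_adj_zero_iff (m : ℕ) (x : Fin (m+3)) :
    (cycleGraph (m+3)).Adj 0 x ↔ x.val = 1 ∨ x.val = m+2 := by
  rw [cycle_adj_val]
  have h0 : (0 : Fin (m+3)).val = 0 := rfl
  have := x.isLt
  omega

lemma cycle_adj_sub (m : ℕ) (v a b : Fin (m+3)) :
    (cycleGraph (m+3)).Adj (a - v) (b - v) ↔ (cycleGraph (m+3)).Adj a b := by
  rw [cycleGraph_adj', cycleGraph_adj', sub_sub_sub_cancel_right, sub_sub_sub_cancel_right]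

lemma numIndep_eq_card {V : Type*} [Fintype V] (G : SimpleGraph V) (i : ℕ)
    [DecidablePred fun s : Finset V => s.card = i ∧ ∀ a ∈ s, ∀ b ∈ s, ¬ G.Adj a b] :
    numIndep G i =
      (univ.filter (fun s : Finset V => s.card = i ∧ ∀ a ∈ s, ∀ b ∈ s, ¬ G.Adj a b)).card := by
  rw [numIndep,
    show {s : Finset V | s.card = i ∧ ∀ a ∈ s, ∀ b ∈ s, ¬ G.Adj a b}
      = ↑(univ.filter (fun s : Finset V => s.card = i ∧ ∀ a ∈ s, ∀ b ∈ s, ¬ G.Adj a b)) by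
      ext s; simp,
    Set.ncard_coe_finset]

lemma double_count {V : Type*} [Fintype V] [DecidableEq V] (A : Finset (Finset V)) (i : ℕ)
    (h : ∀ s ∈ A, s.card = i) :
    i * A.card = ∑ v : V, (A.filter (fun s => v ∈ s)).card := by
  have hs : ∀ s : Finset V, s.card = ∑ v : V, if v ∈ s then 1 else 0 := by
    intro s
    rw [Finset.sum_ite_mem, Finset.univ_inter, Finset.card_eq_sum_ones]
  calc i * A.card = ∑ s ∈ A, s.card := by
        rw [Finset.sum_congr rfl h, Finset.sum_const, smul_eq_mul, mul_comm]
    _ = ∑ s ∈ A, ∑ v : V, if v ∈ s then 1 else 0 := Finset.sum_congr rfl fun s _ => hs s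
    _ = ∑ v : V, ∑ s ∈ A, if v ∈ s then 1 else 0 := Finset.sum_comm
    _ = ∑ v : V, (A.filter (fun s => v ∈ s)).card := by
        refine Finset.sum_congr rfl fun v _ => ?_
        rw [Finset.card_filter]

lemma translate_count (m k : ℕ) (v : Fin (m+3))
    [DecidablePred fun s : Finset (Fin (m+3)) =>
      s.card = k ∧ ∀ a ∈ s, ∀ b ∈ s, ¬ (cycleGraph (m+3)).Adj a b] :
    (((univ : Finset (Finset (Fin (m+3)))).filter
        (fun s => s.card = k ∧ ∀ a ∈ s, ∀ b ∈ s, ¬ (cycleGraph (m+3)).Adj a b)).filter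
        (fun s => v ∈ s)).card
    = (((univ : Finset (Finset (Fin (m+3)))).filter
        (fun s => s.card = k ∧ ∀ a ∈ s, ∀ b ∈ s, ¬ (cycleGraph (m+3)).Adj a b)).filter
        (fun s => (0 : Fin (m+3)) ∈ s)).card := by
  apply Finset.card_nbij' (i := fun s => s.image (· - v)) (j := fun t => t.image (· + v))
  · intro s hs
    simp only [Finset.mem_coe, Finset.mem_filter, Finset.mem_univ, true_and] at hs ⊢
    obtain ⟨⟨hcard, hind⟩, hv⟩ := hs
    refine ⟨⟨?_, ?_⟩, ?_⟩
    · rw [Finset.card_image_of_injective _ (sub_left_injective), hcard]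
    · intro a ha b hb
      obtain ⟨a', ha', rfl⟩ := Finset.mem_image.1 ha
      obtain ⟨b', hb', rfl⟩ := Finset.mem_image.1 hb
      rw [cycle_adj_sub]
      exact hind a' ha' b' hb'
    · exact Finset.mem_image.2 ⟨v, hv, sub_self v⟩
  · intro t ht
    simp only [Finset.mem_coe, Finset.mem_filter, Finset.mem_univ, true_and] at ht ⊢
    obtain ⟨⟨hcard, hind⟩, h0⟩ := ht
    refine ⟨⟨?_, ?_⟩, ?_⟩
    · rw [Finset.card_image_of_injective _ (add_left_injective v), hcard]
    · intro a ha b hb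
      obtain ⟨a', ha', rfl⟩ := Finset.mem_image.1 ha
      obtain ⟨b', hb', rfl⟩ := Finset.mem_image.1 hb
      rw [show a' + v = (a' + v) - 0 by rw [sub_zero], show b' + v = (b' + v) - 0 by rw [sub_zero]]
      rw [show ((a' + v) : Fin (m+3)) - 0 = a' + v by rw [sub_zero],
        show ((b' + v) : Fin (m+3)) - 0 = b' + v by rw [sub_zero]]
      have := cycle_adj_sub m v (a' + v) (b' + v)
      rw [add_sub_cancel_right, add_sub_cancel_right] at this
      rw [← this]
      exact hind a' ha' b' hb'
    · exact Finset.mem_image.2 ⟨0, h0, zero_add v⟩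
  · intro s _
    beta_reduce
    rw [Finset.image_image]
    have : ∀ x ∈ s, (((· + v) ∘ (· - v)) x) = x := fun x _ => sub_add_cancel x v
    rw [Finset.image_congr (fun x hx => this x hx), Finset.image_id']
  · intro t _
    beta_reduce
    rw [Finset.image_image]
    have : ∀ x ∈ t, (((· - v) ∘ (· + v)) x) = x := fun x _ => add_sub_cancel_right x v
    rw [Finset.image_congr (fun x hx => this x hx), Finset.image_id']

lemma zero_count (m k : ℕ)
    [DecidablePred fun s : Finset (Fin (m+3)) =>
      s.card = k + 2 ∧ ∀ a ∈ s, ∀ b ∈ s, ¬ (cycleGraph (m+3)).Adj a b]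
    [DecidablePred fun t : Finset (Fin m) =>
      t.card = k + 1 ∧ ∀ a ∈ t, ∀ b ∈ t, ¬ (pathGraph m).Adj a b] :
    (((univ : Finset (Finset (Fin (m+3)))).filter
        (fun s => s.card = k + 2 ∧ ∀ a ∈ s, ∀ b ∈ s, ¬ (cycleGraph (m+3)).Adj a b)).filter
        (fun s => (0 : Fin (m+3)) ∈ s)).card
    = ((univ : Finset (Finset (Fin m))).filter
        (fun t => t.card = k + 1 ∧ ∀ a ∈ t, ∀ b ∈ t, ¬ (pathGraph m).Adj a b)).card := by
  cases m with
  | zero =>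
    rw [Finset.filter_eq_empty_iff.2, Finset.filter_eq_empty_iff.2, Finset.card_empty,
      Finset.card_empty]
    · intro t _
      intro ⟨hcard, _⟩
      have : t.card ≤ 0 := by
        have := Finset.card_le_card (Finset.subset_univ t)
        simpa using this
      omega
    · intro s hs
      simp only [Finset.mem_coe, Finset.mem_filter, Finset.mem_univ, true_and] at hs
      obtain ⟨hcard, hind⟩ := hs
      intro _
      obtain ⟨a, ha, b, hb, hab⟩ := Finset.one_lt_card.1 (by omega : 1 < s.card)
      have : (cycleGraph (0+3)).Adj a b := by
        have htop : cycleGraph (0+3) = ⊤ := cycleGraph_three_eq_top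
        rw [htop]
        exact hab
      exact hind a ha b hb this
  | succ m' =>
    set M := m' + 1 with hM
    -- bound on elements of an independent set containing 0
    have bound : ∀ s : Finset (Fin (M+3)), (0 : Fin (M+3)) ∈ s →
        (∀ a ∈ s, ∀ b ∈ s, ¬ (cycleGraph (M+3)).Adj a b) →
        ∀ x ∈ s.erase 0, 2 ≤ x.val ∧ x.val ≤ M + 1 := by
      intro s h0 hind x hx
      obtain ⟨hne, hxs⟩ := Finset.mem_erase.1 hx
      have hadj := hind 0 h0 x hxs
      rw [cycle_adj_zero_iff] at hadj
      have hlt := x.isLt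
      have hv0 : x.val ≠ 0 := fun h => hne (Fin.ext (by simp [h]))
      omega
    set f : Fin (M+3) → Fin M := fun x =>
      if h : x.val - 2 < M then ⟨x.val - 2, h⟩ else ⟨0, by omega⟩ with hf
    set g : Fin M → Fin (M+3) := fun y => ⟨y.val + 2, by omega⟩ with hg
    have hfval : ∀ x : Fin (M+3), x.val ≤ M + 1 → (f x).val = x.val - 2 := by
      intro x hx
      rw [hf]
      simp only
      rw [dif_pos (by omega)]
    have hgval : ∀ y : Fin M, (g y).val = y.val + 2 := fun y => rfl
    have hgne : ∀ y : Fin M, g y ≠ 0 := by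
      intro y h
      have : (g y).val = 0 := by rw [h]; rfl
      rw [hgval] at this
      omega
    apply Finset.card_nbij' (i := fun s => (s.erase 0).image f)
      (j := fun t => insert 0 (t.image g))
    · intro s hs
      simp only [Finset.mem_coe, Finset.mem_filter, Finset.mem_univ, true_and] at hs ⊢
      obtain ⟨⟨hcard, hind⟩, h0⟩ := hs
      have hb := bound s h0 hind
      have hinj : Set.InjOn f (s.erase 0) := by
        intro x hx y hy hxy
        have bx := hb x hx
        have byy := hb y hy
        have : (f x).val = (f y).val := by rw [hxy]
        rw [hfval x bx.2, hfval y byy.2] at this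
        exact Fin.ext (by omega)
      constructor
      · rw [Finset.card_image_of_injOn hinj, Finset.card_erase_of_mem h0, hcard]
        omega
      · intro a ha b hbm hadj
        obtain ⟨x, hx, rfl⟩ := Finset.mem_image.1 ha
        obtain ⟨y, hy, rfl⟩ := Finset.mem_image.1 hbm
        have bx := hb x hx
        have byy := hb y hy
        rw [pathGraph_adj, hfval x bx.2, hfval y byy.2] at hadj
        have : (cycleGraph (M+3)).Adj x y := by
          rw [cycle_adj_iff_val M x y bx byy]
          omega
        exact hind x (Finset.mem_of_mem_erase hx) y (Finset.mem_of_mem_erase hy) this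
    · intro t ht
      simp only [Finset.mem_coe, Finset.mem_filter, Finset.mem_univ, true_and] at ht ⊢
      obtain ⟨hcard, hind⟩ := ht
      have h0ni : (0 : Fin (M+3)) ∉ t.image g := by
        intro h
        obtain ⟨y, _, hy⟩ := Finset.mem_image.1 h
        exact hgne y hy
      refine ⟨⟨?_, ?_⟩, Finset.mem_insert_self _ _⟩
      · rw [Finset.card_insert_of_notMem h0ni,
          Finset.card_image_of_injective _ (fun y z h => Fin.ext (by
            have : (g y).val = (g z).val := by rw [h]
            rw [hgval, hgval] at this
            omega)), hcard]
      · intro a ha b hbm hadj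
        rcases Finset.mem_insert.1 ha with rfl | ha'
        · rcases Finset.mem_insert.1 hbm with rfl | hb'
          · exact (cycleGraph (M+3)).irrefl hadj
          · obtain ⟨y, hy, rfl⟩ := Finset.mem_image.1 hb'
            rw [cycle_adj_zero_iff, hgval] at hadj
            have := y.isLt
            omega
        · rcases Finset.mem_insert.1 hbm with rfl | hb'
          · obtain ⟨y, hy, rfl⟩ := Finset.mem_image.1 ha'
            rw [SimpleGraph.adj_comm, cycle_adj_zero_iff, hgval] at hadj
            have := y.isLt
            omega
          · obtain ⟨x, hx, rfl⟩ := Finset.mem_image.1 ha'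
            obtain ⟨y, hy, rfl⟩ := Finset.mem_image.1 hb'
            have hx1 := x.isLt
            have hy1 := y.isLt
            rw [cycle_adj_iff_val M (g x) (g y) (by rw [hgval]; omega) (by rw [hgval]; omega),
              hgval, hgval] at hadj
            have : (pathGraph M).Adj x y := by
              rw [pathGraph_adj]
              omega
            exact hind x hx y hy this
    · intro s hs
      simp only [Finset.mem_coe, Finset.mem_filter, Finset.mem_univ, true_and] at hs
      obtain ⟨⟨hcard, hind⟩, h0⟩ := hs
      have hb := bound s h0 hind
      beta_reduce
      rw [Finset.image_image]
      have heq : ∀ x ∈ s.erase 0, (g ∘ f) x = x := by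
        intro x hx
        have bx := hb x hx
        refine Fin.ext ?_
        show (g (f x)).val = x.val
        rw [hgval, hfval x bx.2]
        omega
      rw [Finset.image_congr heq, Finset.image_id', Finset.insert_erase h0]
    · intro t ht
      simp only [Finset.mem_coe, Finset.mem_filter, Finset.mem_univ, true_and] at ht
      have h0ni : (0 : Fin (M+3)) ∉ t.image g := by
        intro h
        obtain ⟨y, _, hy⟩ := Finset.mem_image.1 h
        exact hgne y hy
      beta_reduce
      rw [Finset.erase_insert h0ni, Finset.image_image]
      have heq : ∀ y ∈ t, (f ∘ g) y = y := by
        intro y hy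
        refine Fin.ext ?_
        show (f (g y)).val = y.val
        have := y.isLt
        rw [hfval (g y) (by rw [hgval]; omega), hgval]
        omega
      rw [Finset.image_congr heq, Finset.image_id']

theorem stmt_4 (n i : ℕ) (hn : 3 ≤ n) (hi : 2 ≤ i) :
    i * numIndep (cycleGraph n) i = n * numIndep (pathGraph (n - 3)) (i - 1) := by
  classical
  obtain ⟨m, rfl⟩ : ∃ m, n = m + 3 := ⟨n - 3, by omega⟩
  obtain ⟨k, rfl⟩ : ∃ k, i = k + 2 := ⟨i - 2, by omega⟩
  rw [show m + 3 - 3 = m by omega, show k + 2 - 1 = k + 1 by omega,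
    numIndep_eq_card, numIndep_eq_card]
  rw [double_count _ (k+2) (fun s hs => (Finset.mem_filter.1 hs).2.1)]
  rw [Finset.sum_congr rfl (fun v _ => translate_count m (k+2) v)]
  rw [Finset.sum_const, Finset.card_univ, Fintype.card_fin, smul_eq_mul]
  rw [zero_count m k]
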